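/- Let R be an associative ring with unity. Every strongly two-degree Ding projective left R-module is Ding projective. -/

import Mathlib

universe u

open scoped TensorProduct DirectSum

/-- The subgroup of `E ⊗[ℤ] F` by which one quotients to obtain the balanced tensor
product `E ⊗_R F` of a right `R`-module `E` and a left `R`-module `F`. -/
def balancedSub (R : Type u) [Ring R] (E F : Type u) [AddCommGroup E] [Module Rᵐᵒᵖ E]
    [AddCommGroup F] [Module R F] : Submodule ℤ (TensorProduct ℤ E F) :=
  Submodule.span ℤ
    {x | ∃ (r : R) (e : E) (f : F),
      x = (MulOpposite.op r • e) ⊗ₜ[ℤ] f - e ⊗ₜ[ℤ] (r • f)}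

/-- The tensor product `E ⊗_R F` of a right `R`-module `E` and a left `R`-module `F`
over a possibly noncommutative ring `R`, realized as a quotient of `E ⊗[ℤ] F`. -/
def ModTensor (R : Type u) [Ring R] (E F : Type u) [AddCommGroup E] [Module Rᵐᵒᵖ E]
    [AddCommGroup F] [Module R F] : Type u :=
  TensorProduct ℤ E F ⧸ balancedSub R E F

noncomputable instance (R : Type u) [Ring R] (E F : Type u) [AddCommGroup E] [Module Rᵐᵒᵖ E]
    [AddCommGroup F] [Module R F] : AddCommGroup (ModTensor R E F) :=
  inferInstanceAs (AddCommGroup (TensorProduct ℤ E F ⧸ balancedSub R E F))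

/-- The map `E ⊗_R F → E' ⊗_R F` induced by a map `g : E → E'` of right `R`-modules. -/
noncomputable def ModTensor.mapLeft (R : Type u) [Ring R] {E E' : Type u} [AddCommGroup E]
    [Module Rᵐᵒᵖ E] [AddCommGroup E'] [Module Rᵐᵒᵖ E'] (F : Type u) [AddCommGroup F]
    [Module R F] (g : E →ₗ[Rᵐᵒᵖ] E') : ModTensor R E F →ₗ[ℤ] ModTensor R E' F :=
  Submodule.mapQ (balancedSub R E F) (balancedSub R E' F)
    (TensorProduct.map (g.restrictScalars ℤ) LinearMap.id)
    (by
      rw [balancedSub, Submodule.span_le]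
      rintro x ⟨r, e, f, rfl⟩
      refine Submodule.subset_span ⟨r, g e, f, ?_⟩
      exact (LinearMap.map_sub _ _ _).trans (by simp [TensorProduct.map_tmul, map_smul]))

/-- The map `E ⊗_R F → E ⊗_R F'` induced by a map `f : F → F'` of left `R`-modules. -/
noncomputable def ModTensor.mapRight (R : Type u) [Ring R] (E : Type u) [AddCommGroup E]
    [Module Rᵐᵒᵖ E] {F F' : Type u} [AddCommGroup F] [Module R F] [AddCommGroup F']
    [Module R F'] (f : F →ₗ[R] F') : ModTensor R E F →ₗ[ℤ] ModTensor R E F' :=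
  Submodule.mapQ (balancedSub R E F) (balancedSub R E F')
    (TensorProduct.map LinearMap.id (f.restrictScalars ℤ))
    (by
      rw [balancedSub, Submodule.span_le]
      rintro x ⟨r, e, y, rfl⟩
      refine Submodule.subset_span ⟨r, e, f y, ?_⟩
      exact (LinearMap.map_sub _ _ _).trans (by simp [TensorProduct.map_tmul, map_smul]))

/-- A left module `F` over a (possibly noncommutative) ring `R` is flat if tensoring
with `F` preserves injectivity of maps of right `R`-modules. -/
def IsFlatModule (R : Type u) [Ring R] (F : Type u) [AddCommGroup F] [Module R F] : Prop :=
  ∀ (E E' : Type u) [AddCommGroup E] [Module Rᵐᵒᵖ E] [AddCommGroup E'] [Module Rᵐᵒᵖ E']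
    (g : E →ₗ[Rᵐᵒᵖ] E'), Function.Injective g →
      Function.Injective (ModTensor.mapLeft R F g)

/-- `Ext^i_R(M, L) = 0`, expressed using the `Ext` functor on the category of left
`R`-modules (with its `ℤ`-linear structure). -/
def ExtIsZero (R : Type u) [Ring R] (i : ℕ) (M L : Type u) [AddCommGroup M] [Module R M]
    [AddCommGroup L] [Module R L] : Prop :=
  Subsingleton ((((_root_.Ext ℤ (ModuleCat.{u} R) i).obj
    (Opposite.op (ModuleCat.of R M))).obj (ModuleCat.of R L)) : Type u)

/-- `FlatDimLE R n L` means the left `R`-module `L` admits a flat resolution of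
length at most `n`. -/
def FlatDimLE (R : Type u) [Ring R] : ℕ → ModuleCat.{u} R → Prop
  | 0, L => IsFlatModule R L
  | n + 1, L =>
    ∃ (F K : ModuleCat.{u} R) (ι : (K : Type u) →ₗ[R] F) (π : (F : Type u) →ₗ[R] L),
      IsFlatModule R F ∧ Function.Injective ι ∧ Function.Surjective π ∧
      Function.Exact ι π ∧ FlatDimLE R n K

/-- A left `R`-module `L` has finite flat dimension if it admits a finite resolution
by flat modules. -/
def HasFiniteFlatDimension (R : Type u) [Ring R] (L : Type u) [AddCommGroup L]
    [Module R L] : Prop :=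
  ∃ n : ℕ, FlatDimLE R n (ModuleCat.of R L)

/-- A left `R`-module `M` is Ding projective if there is an exact sequence
`⋯ → P₁ → P₀ → P₋₁ → P₋₂ → ⋯` of projective modules with `M ≅ ker (P₀ → P₋₁)`
which stays exact under `Hom_R(-, F)` for every flat module `F`. -/
def IsDingProjective (R : Type u) [Ring R] (M : Type u) [AddCommGroup M] [Module R M] : Prop :=
  ∃ (P : ℤ → ModuleCat.{u} R) (d : ∀ n : ℤ, (P (n + 1) : Type u) →ₗ[R] P n),
    (∀ n, Module.Projective R (P n)) ∧
    (∀ n, Function.Exact (d (n + 1)) (d n)) ∧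
    (∀ (F : Type u) [AddCommGroup F] [Module R F], IsFlatModule R F →
      ∀ n : ℤ, Function.Exact
        (fun g : (P n : Type u) →ₗ[R] F => g ∘ₗ d n)
        (fun g : (P (n + 1) : Type u) →ₗ[R] F => g ∘ₗ d (n + 1))) ∧
    Nonempty (M ≃ₗ[R] LinearMap.ker (d (-1)))

/-- A left `R`-module `M` is two-degree Ding projective if there is an exact sequence
`⋯ → D₁ → D₀ → D₋₁ → D₋₂ → ⋯` of Ding projective modules with `M ≅ ker (D₀ → D₋₁)`
which stays exact under `Hom_R(-, F)` for every flat module `F`. -/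
def IsTwoDegreeDingProjective (R : Type u) [Ring R] (M : Type u) [AddCommGroup M]
    [Module R M] : Prop :=
  ∃ (D : ℤ → ModuleCat.{u} R) (d : ∀ n : ℤ, (D (n + 1) : Type u) →ₗ[R] D n),
    (∀ n, IsDingProjective R (D n)) ∧
    (∀ n, Function.Exact (d (n + 1)) (d n)) ∧
    (∀ (F : Type u) [AddCommGroup F] [Module R F], IsFlatModule R F →
      ∀ n : ℤ, Function.Exact
        (fun g : (D n : Type u) →ₗ[R] F => g ∘ₗ d n)
        (fun g : (D (n + 1) : Type u) →ₗ[R] F => g ∘ₗ d (n + 1))) ∧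
    Nonempty (M ≃ₗ[R] LinearMap.ker (d (-1)))

/-- A left `R`-module `M` is strongly two-degree Ding projective if there is an exact
sequence `⋯ →f D →f D →f D →f ⋯` with `D` Ding projective and a single map `f`, with
`M ≅ ker f`, which stays exact under `Hom_R(-, F)` for every flat module `F`. -/
def IsStronglyTwoDegreeDingProjective (R : Type u) [Ring R] (M : Type u) [AddCommGroup M]
    [Module R M] : Prop :=
  ∃ (D : ModuleCat.{u} R) (f : (D : Type u) →ₗ[R] D),
    IsDingProjective R D ∧
    Function.Exact f f ∧
    (∀ (F : Type u) [AddCommGroup F] [Module R F], IsFlatModule R F →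
      Function.Exact
        (fun g : (D : Type u) →ₗ[R] F => g ∘ₗ f)
        (fun g : (D : Type u) →ₗ[R] F => g ∘ₗ f)) ∧
    Nonempty (M ≃ₗ[R] LinearMap.ker f)

/-- A left `R`-module `M` is Gorenstein projective if there is an exact sequence
`⋯ → P₁ → P₀ → P₋₁ → P₋₂ → ⋯` of projective modules with `M ≅ ker (P₀ → P₋₁)`
which stays exact under `Hom_R(-, Q)` for every projective module `Q`. -/
def IsGorensteinProjective (R : Type u) [Ring R] (M : Type u) [AddCommGroup M]
    [Module R M] : Prop :=
  ∃ (P : ℤ → ModuleCat.{u} R) (d : ∀ n : ℤ, (P (n + 1) : Type u) →ₗ[R] P n),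
    (∀ n, Module.Projective R (P n)) ∧
    (∀ n, Function.Exact (d (n + 1)) (d n)) ∧
    (∀ (Q : Type u) [AddCommGroup Q] [Module R Q], Module.Projective R Q →
      ∀ n : ℤ, Function.Exact
        (fun g : (P n : Type u) →ₗ[R] Q => g ∘ₗ d n)
        (fun g : (P (n + 1) : Type u) →ₗ[R] Q => g ∘ₗ d (n + 1))) ∧
    Nonempty (M ≃ₗ[R] LinearMap.ker (d (-1)))

/-- A left `R`-module `H` is Gorenstein flat if there is an exact sequence
`⋯ → F₁ → F₀ → F₋₁ → F₋₂ → ⋯` of flat modules with `H ≅ ker (F₀ → F₋₁)` which stays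
exact under `E ⊗_R -` for every injective right `R`-module `E`. -/
def IsGorensteinFlat (R : Type u) [Ring R] (H : Type u) [AddCommGroup H] [Module R H] : Prop :=
  ∃ (F : ℤ → ModuleCat.{u} R) (d : ∀ n : ℤ, (F (n + 1) : Type u) →ₗ[R] F n),
    (∀ n, IsFlatModule R (F n)) ∧
    (∀ n, Function.Exact (d (n + 1)) (d n)) ∧
    (∀ (E : Type u) [AddCommGroup E] [Module Rᵐᵒᵖ E], Module.Injective Rᵐᵒᵖ E →
      ∀ n : ℤ, Function.Exact
        (ModTensor.mapRight R E (d (n + 1)))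
        (ModTensor.mapRight R E (d n))) ∧
    Nonempty (H ≃ₗ[R] LinearMap.ker (d (-1)))

/-- A left `R`-module `E` is FP-injective if `Ext¹_R(F, E) = 0` for every finitely
presented module `F`. -/
def IsFPInjective (R : Type u) [Ring R] (E : Type u) [AddCommGroup E] [Module R E] : Prop :=
  ∀ (F : Type u) [AddCommGroup F] [Module R F], Module.FinitePresentation R F →
    ExtIsZero R 1 F E

/-- A left `R`-module `M` is Ding injective if there is an exact sequence
`⋯ → E₁ → E₀ → E₋₁ → E₋₂ → ⋯` of injective modules with `M ≅ ker (E₀ → E₋₁)`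
which stays exact under `Hom_R(H, -)` for every FP-injective module `H`. -/
def IsDingInjective (R : Type u) [Ring R] (M : Type u) [AddCommGroup M] [Module R M] : Prop :=
  ∃ (E : ℤ → ModuleCat.{u} R) (d : ∀ n : ℤ, (E (n + 1) : Type u) →ₗ[R] E n),
    (∀ n, Module.Injective R (E n)) ∧
    (∀ n, Function.Exact (d (n + 1)) (d n)) ∧
    (∀ (H : Type u) [AddCommGroup H] [Module R H], IsFPInjective R H →
      ∀ n : ℤ, Function.Exact
        (fun g : H →ₗ[R] (E (n + 1 + 1) : Type u) => d (n + 1) ∘ₗ g)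
        (fun g : H →ₗ[R] (E (n + 1) : Type u) => d n ∘ₗ g)) ∧
    Nonempty (M ≃ₗ[R] LinearMap.ker (d (-1)))

/-- A left `R`-module `M` is two-degree Ding injective if there is an exact sequence
`⋯ → D₁ → D₀ → D₋₁ → D₋₂ → ⋯` of Ding injective modules with `M ≅ ker (D₀ → D₋₁)`
which stays exact under `Hom_R(H, -)` for every FP-injective module `H`. -/
def IsTwoDegreeDingInjective (R : Type u) [Ring R] (M : Type u) [AddCommGroup M]
    [Module R M] : Prop :=
  ∃ (D : ℤ → ModuleCat.{u} R) (d : ∀ n : ℤ, (D (n + 1) : Type u) →ₗ[R] D n),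
    (∀ n, IsDingInjective R (D n)) ∧
    (∀ n, Function.Exact (d (n + 1)) (d n)) ∧
    (∀ (H : Type u) [AddCommGroup H] [Module R H], IsFPInjective R H →
      ∀ n : ℤ, Function.Exact
        (fun g : H →ₗ[R] (D (n + 1 + 1) : Type u) => d (n + 1) ∘ₗ g)
        (fun g : H →ₗ[R] (D (n + 1) : Type u) => d n ∘ₗ g)) ∧
    Nonempty (M ≃ₗ[R] LinearMap.ker (d (-1)))

section DingAux

open MulOpposite

variable {R : Type u} [Ring R]

section FlatBasics

variable {E E' : Type u} [AddCommGroup E] [Module Rᵐᵒᵖ E] [AddCommGroup E'] [Module Rᵐᵒᵖ E']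
variable {F F' : Type u} [AddCommGroup F] [Module R F] [AddCommGroup F'] [Module R F']

lemma mapLeft_mk (g : E →ₗ[Rᵐᵒᵖ] E') (t : TensorProduct ℤ E F) :
    ModTensor.mapLeft R F g (Submodule.Quotient.mk t) =
      (Submodule.Quotient.mk (TensorProduct.map (g.restrictScalars ℤ) LinearMap.id t) :
        TensorProduct ℤ E' F ⧸ balancedSub R E' F) := rfl

lemma mapRight_mk (i : F' →ₗ[R] F) (t : TensorProduct ℤ E F') :
    ModTensor.mapRight R E i (Submodule.Quotient.mk t) =
      (Submodule.Quotient.mk (TensorProduct.map LinearMap.id (i.restrictScalars ℤ) t) :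
        TensorProduct ℤ E F ⧸ balancedSub R E F) := rfl

lemma mapLeft_mapRight_comm (g : E →ₗ[Rᵐᵒᵖ] E') (i : F' →ₗ[R] F) (x : ModTensor R E F') :
    ModTensor.mapLeft R F g (ModTensor.mapRight R E i x) =
      ModTensor.mapRight R E' i (ModTensor.mapLeft R F' g x) := by
  obtain ⟨t, rfl⟩ := Submodule.Quotient.mk_surjective _ x
  rw [show (Submodule.Quotient.mk t : TensorProduct ℤ E F' ⧸ balancedSub R E F') =
    (Submodule.Quotient.mk t : ModTensor R E F') from rfl]
  rw [mapRight_mk, mapLeft_mk, mapLeft_mk, mapRight_mk]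
  congr 1
  induction t using TensorProduct.induction_on with
  | zero => simp
  | tmul x y => simp [TensorProduct.map_tmul]
  | add a b ha hb => simp [map_add, ha, hb]

lemma mapRight_retract (i : F' →ₗ[R] F) (p : F →ₗ[R] F') (h : ∀ y, p (i y) = y)
    (x : ModTensor R E F') : ModTensor.mapRight R E p (ModTensor.mapRight R E i x) = x := by
  obtain ⟨t, rfl⟩ := Submodule.Quotient.mk_surjective _ x
  rw [show (Submodule.Quotient.mk t : TensorProduct ℤ E F' ⧸ balancedSub R E F') =
    (Submodule.Quotient.mk t : ModTensor R E F') from rfl]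
  rw [mapRight_mk, mapRight_mk]
  congr 1
  induction t using TensorProduct.induction_on with
  | zero => simp
  | tmul x y => simp [TensorProduct.map_tmul, h]
  | add a b ha hb => simp [map_add, ha, hb]

lemma isFlat_of_retract (i : F' →ₗ[R] F) (p : F →ₗ[R] F') (h : ∀ y, p (i y) = y)
    (hF : IsFlatModule R F) : IsFlatModule R F' := by
  intro E E' _ _ _ _ g hg
  refine (injective_iff_map_eq_zero _).mpr ?_
  intro x hx
  have h1 : ModTensor.mapLeft R F g (ModTensor.mapRight R E i x) = 0 := by
    rw [mapLeft_mapRight_comm, hx, map_zero]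
  have h2 : ModTensor.mapRight R E i x = 0 :=
    (injective_iff_map_eq_zero _).mp (hF E E' g hg) _ h1
  calc x = ModTensor.mapRight R E p (ModTensor.mapRight R E i x) := (mapRight_retract i p h x).symm
  _ = 0 := by rw [h2, map_zero]

end FlatBasics

section FinsuppFlat

variable (E : Type u) [AddCommGroup E] [Module Rᵐᵒᵖ E]

/-- `r ↦ op r • e` as an additive hom. -/
def opSmulHom (e : E) : R →+ E :=
  AddMonoidHom.mk' (fun r => op r • e) (by
    intro a b
    show op (a + b) • e = op a • e + op b • e
    rw [op_add, add_smul])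

@[simp] lemma opSmulHom_apply (e : E) (r : R) : opSmulHom (R := R) E e r = op r • e := rfl

noncomputable def alphaAux (ι : Type u) : E →+ ((ι →₀ R) →ₗ[ℤ] (ι →₀ E)) :=
  AddMonoidHom.mk'
    (fun e => Finsupp.lsum ℤ (fun j => LinearMap.comp
      ((Finsupp.lsingle j : E →ₗ[ℤ] (ι →₀ E))) (opSmulHom (R := R) E e).toIntLinearMap))
    (by
      intro e e'
      apply LinearMap.ext
      intro φ
      simp only [Finsupp.lsum_apply, LinearMap.add_apply]
      rw [← Finsupp.sum_add]
      apply Finsupp.sum_congr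
      intro j _
      ext r
      simp [smul_add, Finsupp.single_add])

noncomputable def alphaMap (ι : Type u) : TensorProduct ℤ E (ι →₀ R) →ₗ[ℤ] (ι →₀ E) :=
  TensorProduct.lift (alphaAux (R := R) E ι).toIntLinearMap

lemma alphaMap_tmul (ι : Type u) (e : E) (φ : ι →₀ R) :
    alphaMap (R := R) E ι (e ⊗ₜ[ℤ] φ) = φ.sum fun j r => Finsupp.single j (op r • e) := by
  simp only [alphaMap, alphaAux, TensorProduct.lift.tmul, AddMonoidHom.coe_toIntLinearMap,
    AddMonoidHom.mk'_apply, Finsupp.lsum_apply]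
  apply Finsupp.sum_congr
  intro j _
  rfl

lemma alphaMap_tmul_single (ι : Type u) (e : E) (j : ι) (s : R) :
    alphaMap (R := R) E ι (e ⊗ₜ[ℤ] Finsupp.single j s) = Finsupp.single j (op s • e) := by
  rw [alphaMap_tmul, Finsupp.sum_single_index]
  simp

lemma alphaMap_balanced (ι : Type u) :
    balancedSub R E (ι →₀ R) ≤ LinearMap.ker (alphaMap (R := R) E ι) := by
  rw [balancedSub, Submodule.span_le]
  rintro x ⟨r, e, φ, rfl⟩
  simp only [SetLike.mem_coe, LinearMap.mem_ker, map_sub, sub_eq_zero]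
  induction φ using Finsupp.induction_linear with
  | zero => simp
  | add f g hf hg =>
    rw [smul_add, TensorProduct.tmul_add, TensorProduct.tmul_add, map_add, map_add, hf, hg]
  | single j s =>
    rw [alphaMap_tmul_single, Finsupp.smul_single', alphaMap_tmul_single, ← mul_smul, ← op_mul]

noncomputable def alphaBar (ι : Type u) : ModTensor R E (ι →₀ R) →ₗ[ℤ] (ι →₀ E) :=
  Submodule.liftQ _ (alphaMap (R := R) E ι) (alphaMap_balanced E ι)

lemma alphaBar_mk (ι : Type u) (t : TensorProduct ℤ E (ι →₀ R)) :
    alphaBar (R := R) E ι (Submodule.Quotient.mk t) = alphaMap (R := R) E ι t :=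
  Submodule.liftQ_apply _ _ t

noncomputable def betaMap (ι : Type u) : (ι →₀ E) →ₗ[ℤ] ModTensor R E (ι →₀ R) :=
  Finsupp.lsum ℤ (fun j => LinearMap.comp (balancedSub R E (ι →₀ R)).mkQ
    ((TensorProduct.mk ℤ E (ι →₀ R)).flip (Finsupp.single j (1 : R))))

lemma betaMap_single (ι : Type u) (j : ι) (e : E) :
    betaMap (R := R) E ι (Finsupp.single j e) =
      Submodule.Quotient.mk (e ⊗ₜ[ℤ] Finsupp.single j (1 : R)) := by
  rw [betaMap]
  simp only [Finsupp.lsum_apply]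
  rw [Finsupp.sum_single_index (by simp)]
  rfl

lemma beta_alpha (ι : Type u) (x : ModTensor R E (ι →₀ R)) :
    betaMap (R := R) E ι (alphaBar (R := R) E ι x) = x := by
  obtain ⟨t, rfl⟩ := Submodule.Quotient.mk_surjective _ x
  rw [show (Submodule.Quotient.mk t : TensorProduct ℤ E (ι →₀ R) ⧸ balancedSub R E (ι →₀ R)) =
    (Submodule.Quotient.mk t : ModTensor R E (ι →₀ R)) from rfl]
  rw [alphaBar_mk]
  induction t using TensorProduct.induction_on with
  | zero => simp; rfl
  | add a b ha hb => rw [map_add, map_add, ha, hb]; rfl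
  | tmul e φ =>
    induction φ using Finsupp.induction_linear with
    | zero => simp; rfl
    | add f g hf hg =>
      rw [TensorProduct.tmul_add, map_add, map_add, hf, hg]; rfl
    | single j s =>
      rw [alphaMap_tmul_single, betaMap_single]
      apply (Submodule.Quotient.eq _).mpr
      refine Submodule.subset_span ⟨s, e, Finsupp.single j (1 : R), ?_⟩
      rw [Finsupp.smul_single', mul_one]

lemma alphaBar_injective (ι : Type u) : Function.Injective (alphaBar (R := R) E ι) :=
  Function.LeftInverse.injective (beta_alpha (R := R) E ι)

lemma alphaBar_natural (ι : Type u) {E' : Type u} [AddCommGroup E'] [Module Rᵐᵒᵖ E']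
    (g : E →ₗ[Rᵐᵒᵖ] E') (x : ModTensor R E (ι →₀ R)) :
    alphaBar (R := R) E' ι (ModTensor.mapLeft R (ι →₀ R) g x) =
      Finsupp.mapRange.linearMap (g.toAddMonoidHom.toIntLinearMap)
        (alphaBar (R := R) E ι x) := by
  obtain ⟨t, rfl⟩ := Submodule.Quotient.mk_surjective _ x
  rw [show (Submodule.Quotient.mk t : TensorProduct ℤ E (ι →₀ R) ⧸ balancedSub R E (ι →₀ R)) =
    (Submodule.Quotient.mk t : ModTensor R E (ι →₀ R)) from rfl]
  rw [mapLeft_mk, alphaBar_mk, alphaBar_mk]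
  induction t using TensorProduct.induction_on with
  | zero => simp
  | add a b ha hb => rw [map_add, map_add, map_add, map_add, ha, hb]
  | tmul e φ =>
    induction φ using Finsupp.induction_linear with
    | zero => simp
    | add f g hf hg =>
      rw [TensorProduct.tmul_add, map_add, map_add, map_add, map_add, hf, hg]
    | single j s =>
      rw [TensorProduct.map_tmul, alphaMap_tmul_single]
      simp only [LinearMap.id_apply, LinearMap.coe_restrictScalars]
      rw [alphaMap_tmul_single, Finsupp.mapRange.linearMap_apply, Finsupp.mapRange_single]
      simp only [AddMonoidHom.coe_toIntLinearMap, LinearMap.toAddMonoidHom_coe]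
      rw [map_smul]

lemma isFlat_finsupp (ι : Type u) : IsFlatModule R (ι →₀ R) := by
  intro E E' _ _ _ _ g hg
  refine (injective_iff_map_eq_zero _).mpr ?_
  intro x hx
  have h1 : alphaBar (R := R) E' ι (ModTensor.mapLeft R (ι →₀ R) g x) = 0 := by
    rw [hx, map_zero]
  rw [alphaBar_natural] at h1
  have h2 : alphaBar (R := R) E ι x = 0 := by
    ext j
    apply hg
    simp only [Finsupp.coe_zero, Pi.zero_apply, map_zero]
    have hj : (Finsupp.mapRange.linearMap (g.toAddMonoidHom.toIntLinearMap)
        (alphaBar (R := R) E ι x)) j = 0 := by rw [h1]; rfl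
    simpa [Finsupp.mapRange.linearMap_apply, Finsupp.mapRange_apply] using hj
  exact alphaBar_injective (R := R) E ι (show _ = _ by rw [h2, map_zero])

lemma isFlat_of_projective (F : Type u) [AddCommGroup F] [Module R F]
    (hF : Module.Projective R F) : IsFlatModule R F := by
  obtain ⟨s, hs⟩ := Module.projective_def'.mp hF
  refine isFlat_of_retract s (Finsupp.linearCombination R _root_.id) ?_ (isFlat_finsupp F)
  intro y
  exact congrArg (fun (h : F →ₗ[R] F) => h y) hs

end FinsuppFlat

end DingAux
section EPropSection

variable {R : Type u} [Ring R]

/-- `Ext¹(G, F) = 0` for every flat `F`, in elementary terms. -/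
def EProp (R : Type u) [Ring R] (G : Type u) [AddCommGroup G] [Module R G] : Prop :=
  ∀ (F : Type u) [AddCommGroup F] [Module R F], IsFlatModule R F →
  ∀ (B : Type u) [AddCommGroup B] [Module R B] (q : B →ₗ[R] G), Function.Surjective q →
  ∀ (ψ : ↥(LinearMap.ker q) →ₗ[R] F), ∃ Φ : B →ₗ[R] F, ∀ x : ↥(LinearMap.ker q), Φ x = ψ x

lemma factor_surj {A B F : Type u} [AddCommGroup A] [Module R A] [AddCommGroup B] [Module R B]
    [AddCommGroup F] [Module R F] (σ : A →ₗ[R] B) (hσ : Function.Surjective σ)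
    (Θ : A →ₗ[R] F) (h : LinearMap.ker σ ≤ LinearMap.ker Θ) :
    ∃ Φ : B →ₗ[R] F, ∀ a, Φ (σ a) = Θ a := by
  refine ⟨(Submodule.liftQ (LinearMap.ker σ) Θ h) ∘ₗ
    ((LinearMap.quotKerEquivOfSurjective σ hσ).symm :
      B ≃ₗ[R] (A ⧸ LinearMap.ker σ)).toLinearMap, ?_⟩
  intro a
  have h1 : (LinearMap.quotKerEquivOfSurjective σ hσ) (Submodule.Quotient.mk a) = σ a := by
    simp [LinearMap.quotKerEquivOfSurjective]
  have h2 : (LinearMap.quotKerEquivOfSurjective σ hσ).symm (σ a) = Submodule.Quotient.mk a := by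
    rw [LinearEquiv.symm_apply_eq, h1]
  simp only [LinearMap.comp_apply, LinearEquiv.coe_coe, h2, Submodule.liftQ_apply]

lemma eprop_congr {G G' : Type u} [AddCommGroup G] [Module R G] [AddCommGroup G'] [Module R G']
    (e : G ≃ₗ[R] G') (h : EProp R G) : EProp R G' := by
  intro F _ _ hF B _ _ q hq ψ
  have hq' : Function.Surjective ((e.symm : G' ≃ₗ[R] G).toLinearMap ∘ₗ q) :=
    e.symm.surjective.comp hq
  have hker : LinearMap.ker ((e.symm : G' ≃ₗ[R] G).toLinearMap ∘ₗ q) = LinearMap.ker q := by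
    ext x
    simp [LinearMap.mem_ker, LinearEquiv.map_eq_zero_iff]
  obtain ⟨Φ, hΦ⟩ := h F hF B ((e.symm : G' ≃ₗ[R] G).toLinearMap ∘ₗ q) hq'
      (ψ ∘ₗ Submodule.inclusion hker.le)
  refine ⟨Φ, ?_⟩
  intro x
  have hx : (x : B) ∈ LinearMap.ker ((e.symm : G' ≃ₗ[R] G).toLinearMap ∘ₗ q) := by
    rw [hker]; exact x.2
  have h2 := hΦ ⟨(x : B), hx⟩
  simpa [Submodule.inclusion_apply] using h2

lemma eprop_of_ses {A G C : Type u} [AddCommGroup A] [Module R A] [AddCommGroup G] [Module R G]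
    [AddCommGroup C] [Module R C] (i : A →ₗ[R] G) (p : G →ₗ[R] C)
    (hi : Function.Injective i) (hp : Function.Surjective p) (hex : Function.Exact i p)
    (hA : EProp R A) (hC : EProp R C) : EProp R G := by
  intro F _ _ hF B _ _ q hq ψ
  set B' : Submodule R B := Submodule.comap q (LinearMap.range i) with hB'
  have hmem : ∀ x : ↥B', q (x : B) ∈ LinearMap.range i := fun x => x.2
  set q₀ : ↥B' →ₗ[R] ↥(LinearMap.range i) :=
    LinearMap.codRestrict _ (q ∘ₗ B'.subtype) hmem with hq₀
  set eA := LinearEquiv.ofInjective i hi with heA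
  set qA : ↥B' →ₗ[R] A := (eA.symm : ↥(LinearMap.range i) ≃ₗ[R] A).toLinearMap ∘ₗ q₀ with hqAdef
  have hq₀val : ∀ x : ↥B', ((q₀ x : ↥(LinearMap.range i)) : G) = q (x : B) := fun _ => rfl
  have hqA : Function.Surjective qA := by
    intro a
    obtain ⟨b, hb⟩ := hq (i a)
    have hbB' : b ∈ B' := by
      rw [hB', Submodule.mem_comap, hb]; exact ⟨a, rfl⟩
    refine ⟨⟨b, hbB'⟩, ?_⟩
    have h1 : q₀ ⟨b, hbB'⟩ = eA a := by
      apply Subtype.ext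
      rw [hq₀val, heA, LinearEquiv.ofInjective_apply]
      exact hb
    rw [hqAdef, LinearMap.comp_apply, h1, LinearEquiv.coe_coe, LinearEquiv.symm_apply_apply]
  have hker1 : ∀ x : ↥B', qA x = 0 ↔ q (x : B) = 0 := by
    intro x
    rw [hqAdef, LinearMap.comp_apply, LinearEquiv.coe_coe, LinearEquiv.map_eq_zero_iff]
    constructor
    · intro h0
      rw [← hq₀val x, h0, Submodule.coe_zero]
    · intro h0
      apply Subtype.ext
      rw [hq₀val, h0, Submodule.coe_zero]
  set κ : ↥(LinearMap.ker qA) →ₗ[R] ↥(LinearMap.ker q) :=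
    LinearMap.codRestrict _ (B'.subtype ∘ₗ (LinearMap.ker qA).subtype)
      (fun x => LinearMap.mem_ker.mpr ((hker1 x.1).mp (LinearMap.mem_ker.mp x.2))) with hκ
  obtain ⟨Φ₁, hΦ₁⟩ := hA F hF (↥B') qA hqA (ψ ∘ₗ κ)
  set qC : B →ₗ[R] C := p ∘ₗ q with hqC
  have hqCs : Function.Surjective qC := hp.comp hq
  have hkerC : LinearMap.ker qC = B' := by
    ext x
    rw [hqC, LinearMap.mem_ker, LinearMap.comp_apply, hB', Submodule.mem_comap,
      ← LinearMap.mem_ker, hex.linearMap_ker_eq]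
  set κ₂ : ↥(LinearMap.ker qC) →ₗ[R] ↥B' :=
    LinearMap.codRestrict B' ((LinearMap.ker qC).subtype)
      (fun x => by rw [← hkerC]; exact x.2) with hκ₂
  obtain ⟨Φ, hΦ⟩ := hC F hF B qC hqCs (Φ₁ ∘ₗ κ₂)
  refine ⟨Φ, ?_⟩
  intro x
  have hx2 : (x : B) ∈ LinearMap.ker qC := by
    rw [hqC, LinearMap.mem_ker, LinearMap.comp_apply, LinearMap.mem_ker.mp x.2, map_zero]
  have h3 := hΦ ⟨(x : B), hx2⟩
  have hxB' : (x : B) ∈ B' := by rw [← hkerC]; exact hx2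
  have hxk : (⟨(x : B), hxB'⟩ : ↥B') ∈ LinearMap.ker qA :=
    LinearMap.mem_ker.mpr ((hker1 _).mpr (LinearMap.mem_ker.mp x.2))
  have h4 := hΦ₁ ⟨⟨(x : B), hxB'⟩, hxk⟩
  have h5 : κ₂ ⟨(x : B), hx2⟩ = ⟨(x : B), hxB'⟩ := rfl
  have h6 : κ ⟨⟨(x : B), hxB'⟩, hxk⟩ = x := Subtype.ext rfl
  rw [LinearMap.comp_apply] at h3
  rw [h5] at h3
  rw [LinearMap.comp_apply, h6] at h4
  rw [h3]
  exact h4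

lemma eprop_of_presentation {Q G : Type u} [AddCommGroup Q] [Module R Q] [AddCommGroup G]
    [Module R G] (hQ : Module.Projective R Q) (π : Q →ₗ[R] G) (hπ : Function.Surjective π)
    (hext : ∀ (F : Type u) [AddCommGroup F] [Module R F], IsFlatModule R F →
      ∀ ψ : ↥(LinearMap.ker π) →ₗ[R] F, ∃ Φ : Q →ₗ[R] F, ∀ x : ↥(LinearMap.ker π), Φ x = ψ x) :
    EProp R G := by
  intro F _ _ hF B _ _ q hq ψ
  haveI := hQ
  obtain ⟨t, ht⟩ := Module.projective_lifting_property q π hq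
  have hmem : ∀ x : ↥(LinearMap.ker π), t (x : Q) ∈ LinearMap.ker q := by
    intro x
    rw [LinearMap.mem_ker, ← LinearMap.comp_apply, ht]
    exact x.2
  obtain ⟨X, hX⟩ := hext F hF
    (ψ ∘ₗ LinearMap.codRestrict _ (t ∘ₗ (LinearMap.ker π).subtype) hmem)
  set σ : Q × ↥(LinearMap.ker q) →ₗ[R] B := t.coprod (LinearMap.ker q).subtype with hσdef
  have hσ : Function.Surjective σ := by
    intro b
    obtain ⟨a, ha⟩ := hπ (q b)
    have hmem2 : b - t a ∈ LinearMap.ker q := by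
      rw [LinearMap.mem_ker, map_sub, ← LinearMap.comp_apply, ht, ha, sub_self]
    exact ⟨(a, ⟨b - t a, hmem2⟩), by simp [hσdef]⟩
  set Θ : Q × ↥(LinearMap.ker q) →ₗ[R] F := X.coprod ψ with hΘdef
  have hθ : LinearMap.ker σ ≤ LinearMap.ker Θ := by
    rintro ⟨a, x⟩ hax
    have h0 : t a + (x : B) = 0 := hax
    have ha : a ∈ LinearMap.ker π := by
      rw [LinearMap.mem_ker, ← ht, LinearMap.comp_apply,
        show t a = -(x : B) from eq_neg_of_add_eq_zero_left h0, map_neg,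
        LinearMap.mem_ker.mp x.2, neg_zero]
    show X a + ψ x = 0
    rw [hX ⟨a, ha⟩]
    show ψ _ + ψ x = 0
    rw [← map_add]
    have hz : (LinearMap.codRestrict _ (t ∘ₗ (LinearMap.ker π).subtype) hmem ⟨a, ha⟩ + x :
        ↥(LinearMap.ker q)) = 0 := Subtype.ext h0
    rw [hz, map_zero]
  obtain ⟨Φ, hΦ⟩ := factor_surj σ hσ Θ hθ
  refine ⟨Φ, ?_⟩
  intro x
  have h1 : (x : B) = σ (0, x) := by simp [hσdef]
  rw [h1, hΦ]
  show X 0 + ψ x = ψ x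
  rw [map_zero, zero_add]

lemma eprop_of_surj {D C : Type u} [AddCommGroup D] [Module R D] [AddCommGroup C] [Module R C]
    (p : D →ₗ[R] C) (hp : Function.Surjective p) (hD : EProp R D)
    (hext : ∀ (F : Type u) [AddCommGroup F] [Module R F], IsFlatModule R F →
      ∀ φ : ↥(LinearMap.ker p) →ₗ[R] F, ∃ Φ : D →ₗ[R] F, ∀ x : ↥(LinearMap.ker p), Φ x = φ x) :
    EProp R C := by
  intro F _ _ hF B _ _ q hq ψ
  set X : Submodule R (B × D) :=
    LinearMap.ker ((q ∘ₗ LinearMap.fst R B D) - (p ∘ₗ LinearMap.snd R B D)) with hXdef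
  have hmemX : ∀ z : B × D, z ∈ X ↔ q z.1 = p z.2 := by
    intro z
    rw [hXdef, LinearMap.mem_ker, LinearMap.sub_apply, sub_eq_zero]
    rfl
  set pr2 : ↥X →ₗ[R] D := (LinearMap.snd R B D) ∘ₗ X.subtype with hpr2def
  have hpr2 : Function.Surjective pr2 := by
    intro dd
    obtain ⟨b, hb⟩ := hq (p dd)
    exact ⟨⟨(b, dd), (hmemX _).mpr hb⟩, rfl⟩
  have hker2mem : ∀ z : ↥(LinearMap.ker pr2), ((z : ↥X) : B × D).1 ∈ LinearMap.ker q := by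
    intro z
    have hz2 : ((z : ↥X) : B × D).2 = 0 := LinearMap.mem_ker.mp z.2
    have := (hmemX ((z : ↥X) : B × D)).mp (z : ↥X).2
    rw [LinearMap.mem_ker, this, hz2, map_zero]
  set κ : ↥(LinearMap.ker pr2) →ₗ[R] ↥(LinearMap.ker q) :=
    LinearMap.codRestrict _
      ((LinearMap.fst R B D) ∘ₗ X.subtype ∘ₗ (LinearMap.ker pr2).subtype) hker2mem with hκdef
  obtain ⟨Φ, hΦ⟩ := hD F hF (↥X) pr2 hpr2 (ψ ∘ₗ κ)
  have hembmem : ∀ k : ↥(LinearMap.ker p), ((0 : B), (k : D)) ∈ X := by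
    intro k
    rw [hmemX]
    rw [map_zero, LinearMap.mem_ker.mp k.2]
  set emb : ↥(LinearMap.ker p) →ₗ[R] ↥X :=
    LinearMap.codRestrict X ((LinearMap.inr R B D) ∘ₗ (LinearMap.ker p).subtype)
      (fun k => hembmem k) with hembdef
  obtain ⟨lam, hlam⟩ := hext F hF (Φ ∘ₗ emb)
  set Φ' : ↥X →ₗ[R] F := Φ - lam ∘ₗ pr2 with hΦ'def
  set pr1 : ↥X →ₗ[R] B := (LinearMap.fst R B D) ∘ₗ X.subtype with hpr1def
  have hpr1 : Function.Surjective pr1 := by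
    intro b
    obtain ⟨dd, hd⟩ := hp (q b)
    exact ⟨⟨(b, dd), (hmemX _).mpr hd.symm⟩, rfl⟩
  have hker1 : LinearMap.ker pr1 ≤ LinearMap.ker Φ' := by
    intro z hz
    have hz1 : ((z : B × D)).1 = 0 := hz
    have hz2 : ((z : B × D)).2 ∈ LinearMap.ker p := by
      rw [LinearMap.mem_ker, ← (hmemX _).mp z.2, hz1, map_zero]
    have hze : z = emb ⟨(z : B × D).2, hz2⟩ := by
      apply Subtype.ext
      apply Prod.ext
      · exact hz1
      · rfl
    rw [LinearMap.mem_ker, hΦ'def, LinearMap.sub_apply, LinearMap.comp_apply]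
    rw [hze]
    have hpe : pr2 (emb ⟨(z : B × D).2, hz2⟩) = ((z : B × D).2 : D) := rfl
    rw [hpe, hlam ⟨(z : B × D).2, hz2⟩, LinearMap.comp_apply, sub_self]
  obtain ⟨Φ'', hΦ''⟩ := factor_surj pr1 hpr1 Φ' hker1
  refine ⟨Φ'', ?_⟩
  intro x
  have hxX : ((x : B), (0 : D)) ∈ X := by
    rw [hmemX, LinearMap.mem_ker.mp x.2, map_zero]
  have h1 : (x : B) = pr1 ⟨((x : B), 0), hxX⟩ := rfl
  rw [h1, hΦ'']
  rw [hΦ'def, LinearMap.sub_apply, LinearMap.comp_apply]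
  have hk : (⟨((x : B), 0), hxX⟩ : ↥X) ∈ LinearMap.ker pr2 := by
    rw [LinearMap.mem_ker]; rfl
  have h2 := hΦ ⟨⟨((x : B), 0), hxX⟩, hk⟩
  have h3 : pr2 (⟨((x : B), 0), hxX⟩ : ↥X) = 0 := rfl
  rw [h3, map_zero, sub_zero, h2, LinearMap.comp_apply]
  congr 1

end EPropSection
section Cycles

variable {R : Type u} [Ring R]
variable (P : ℤ → ModuleCat.{u} R) (d : ∀ n : ℤ, (P (n + 1) : Type u) →ₗ[R] P n)

/-- Maps from a cycle of a totally acyclic complex to a flat module extend to the ambient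
projective. -/
lemma cycle_hom_ext
    (hexd : ∀ n, Function.Exact (d (n + 1)) (d n))
    (hhom : ∀ (F : Type u) [AddCommGroup F] [Module R F], IsFlatModule R F →
      ∀ n : ℤ, Function.Exact
        (fun g : (P n : Type u) →ₗ[R] F => g ∘ₗ d n)
        (fun g : (P (n + 1) : Type u) →ₗ[R] F => g ∘ₗ d (n + 1)))
    (F : Type u) [AddCommGroup F] [Module R F] (hF : IsFlatModule R F) (n : ℤ)
    (ψ : ↥(LinearMap.ker (d n)) →ₗ[R] F) :
    ∃ Φ : (P (n + 1) : Type u) →ₗ[R] F, ∀ x : ↥(LinearMap.ker (d n)), Φ x = ψ x := by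
  have hmem : ∀ x : (P (n + 1 + 1) : Type u), d (n + 1) x ∈ LinearMap.ker (d n) :=
    fun x => LinearMap.mem_ker.mpr ((hexd n).apply_apply_eq_zero x)
  set g : (P (n + 1 + 1) : Type u) →ₗ[R] F :=
    ψ ∘ₗ LinearMap.codRestrict _ (d (n + 1)) hmem with hgdef
  have hg : g ∘ₗ d (n + 1 + 1) = 0 := by
    apply LinearMap.ext
    intro x
    rw [LinearMap.comp_apply, LinearMap.zero_apply, hgdef, LinearMap.comp_apply]
    have hz : (LinearMap.codRestrict (LinearMap.ker (d n)) (d (n + 1)) hmem)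
        ((d (n + 1 + 1)) x) = 0 :=
      Subtype.ext ((hexd (n + 1)).apply_apply_eq_zero x)
    rw [hz, map_zero]
  obtain ⟨h, hh⟩ := ((hhom F hF (n + 1)) g).mp hg
  refine ⟨h, ?_⟩
  intro x
  obtain ⟨y, hy⟩ := ((hexd n) ((x : (P (n + 1) : Type u)))).mp (LinearMap.mem_ker.mp x.2)
  have h1 : h (x : (P (n + 1) : Type u)) = g y := by
    rw [← hy]
    exact DFunLike.congr_fun hh y
  rw [h1, hgdef, LinearMap.comp_apply]
  congr 1
  exact Subtype.ext hy

lemma eprop_cycle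
    (hproj : ∀ n, Module.Projective R (P n : Type u))
    (hexd : ∀ n, Function.Exact (d (n + 1)) (d n))
    (hhom : ∀ (F : Type u) [AddCommGroup F] [Module R F], IsFlatModule R F →
      ∀ n : ℤ, Function.Exact
        (fun g : (P n : Type u) →ₗ[R] F => g ∘ₗ d n)
        (fun g : (P (n + 1) : Type u) →ₗ[R] F => g ∘ₗ d (n + 1)))
    (n : ℤ) : EProp R ↥(LinearMap.ker (d n)) := by
  have hmem : ∀ x : (P (n + 1 + 1) : Type u), d (n + 1) x ∈ LinearMap.ker (d n) :=
    fun x => LinearMap.mem_ker.mpr ((hexd n).apply_apply_eq_zero x)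
  set π : (P (n + 1 + 1) : Type u) →ₗ[R] ↥(LinearMap.ker (d n)) :=
    LinearMap.codRestrict _ (d (n + 1)) hmem with hπdef
  have hπ : Function.Surjective π := by
    intro z
    obtain ⟨y, hy⟩ := ((hexd n) ((z : (P (n + 1) : Type u)))).mp (LinearMap.mem_ker.mp z.2)
    exact ⟨y, Subtype.ext hy⟩
  have hkπ : LinearMap.ker π = LinearMap.ker (d (n + 1)) :=
    LinearMap.ker_codRestrict _ _ _
  refine eprop_of_presentation (hproj (n + 1 + 1)) π hπ ?_
  intro F _ _ hF ψ
  obtain ⟨Φ, hΦ⟩ := cycle_hom_ext P d hexd hhom F hF (n + 1)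
    (ψ ∘ₗ Submodule.inclusion hkπ.ge)
  refine ⟨Φ, ?_⟩
  intro x
  have hx : (x : (P (n + 1 + 1) : Type u)) ∈ LinearMap.ker (d (n + 1)) := by
    rw [← hkπ]; exact x.2
  have h2 := hΦ ⟨(x : (P (n + 1 + 1) : Type u)), hx⟩
  simpa [Submodule.inclusion_apply] using h2

end Cycles
section Steps

variable {R : Type u} [Ring R]

/-- Cast between carriers of equal modules. -/
def mcast {X Y : ModuleCat.{u} R} (h : X = Y) : (X : Type u) ≃ₗ[R] (Y : Type u) := by
  subst h; exact LinearEquiv.refl R (X : Type u)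

variable {P : ℤ → ModuleCat.{u} R} {d : ∀ n : ℤ, (P (n + 1) : Type u) →ₗ[R] P n}

lemma d_mcast_ker {a b : ℤ} (h : a = b) (E : P (b + 1) = P (a + 1))
    (x : (P (b + 1) : Type u)) : d a ((mcast E) x) = 0 ↔ d b x = 0 := by
  subst h
  exact Iff.rfl

/-- State for the left (projective resolution) recursion. -/
structure LSt (R : Type u) [Ring R] (P : ℤ → ModuleCat.{u} R)
    (d : ∀ n : ℤ, (P (n + 1) : Type u) →ₗ[R] P n) where
  k : ℤ
  Sp : ModuleCat.{u} R
  C : ModuleCat.{u} R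
  projC : Module.Projective R (C : Type u)
  c : (C : Type u) →ₗ[R] Sp
  hc : Function.Surjective c
  α : ↥(LinearMap.ker (d k)) →ₗ[R] ↥(LinearMap.ker c)
  β : ↥(LinearMap.ker c) →ₗ[R] (Sp : Type u)
  hα : Function.Injective α
  hβ : Function.Surjective β
  hab : Function.Exact α β
  eSp : EProp R (Sp : Type u)
  eS : EProp R ↥(LinearMap.ker c)

/-- State for the right (coresolution) recursion. -/
structure RSt (R : Type u) [Ring R] (P : ℤ → ModuleCat.{u} R)
    (d : ∀ n : ℤ, (P (n + 1) : Type u) →ₗ[R] P n) where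
  k : ℤ
  A : ModuleCat.{u} R
  RA : ModuleCat.{u} R
  projRA : Module.Projective R (RA : Type u)
  j : (A : Type u) →ₗ[R] RA
  hj : Function.Injective j
  ι : (A : Type u) →ₗ[R] ((RA : Type u) ⧸ LinearMap.range j)
  π : ((RA : Type u) ⧸ LinearMap.range j) →ₗ[R] ↥(LinearMap.ker (d k))
  hι : Function.Injective ι
  hπ : Function.Surjective π
  hexc : Function.Exact ι π
  eA : EProp R (A : Type u)
  eG : EProp R ((RA : Type u) ⧸ LinearMap.range j)

variable (hproj : ∀ n, Module.Projective R (P n : Type u))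
variable (hexd : ∀ n, Function.Exact (d (n + 1)) (d n))
variable (hZ : ∀ n, EProp R ↥(LinearMap.ker (d n)))

/-- One step of the left recursion. -/
noncomputable def lstep (s : LSt R P d) : LSt R P d := by
  haveI := s.projC
  haveI := hproj (s.k + 1 + 1)
  -- the corestricted differential covering ker (d k)
  have hmemcr : ∀ x : (P (s.k + 1 + 1) : Type u), d (s.k + 1) x ∈ LinearMap.ker (d s.k) :=
    fun x => LinearMap.mem_ker.mpr ((hexd s.k).apply_apply_eq_zero x)
  set cr : (P (s.k + 1 + 1) : Type u) →ₗ[R] ↥(LinearMap.ker (d s.k)) :=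
    LinearMap.codRestrict _ (d (s.k + 1)) hmemcr with hcrdef
  have hcr : Function.Surjective cr := by
    intro z
    obtain ⟨y, hy⟩ := ((hexd s.k) ((z : (P (s.k + 1) : Type u)))).mp (LinearMap.mem_ker.mp z.2)
    exact ⟨y, Subtype.ext hy⟩
  set comp1 : (P (s.k + 1 + 1) : Type u) →ₗ[R] ↥(LinearMap.ker s.c) := s.α ∘ₗ cr with hcomp1
  have hlex := Module.projective_lifting_property s.β s.c s.hβ
  set l := Classical.choose hlex with hldef
  have hl : s.β ∘ₗ l = s.c := Classical.choose_spec hlex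
  set c' : ((P (s.k + 1 + 1) : Type u) × (s.C : Type u)) →ₗ[R] ↥(LinearMap.ker s.c) :=
    comp1.coprod l with hc'def
  have hrangeβα : LinearMap.ker s.β = LinearMap.range s.α := s.hab.linearMap_ker_eq
  have hc' : Function.Surjective c' := by
    intro z
    obtain ⟨y, hy⟩ := s.hc (s.β z)
    have h1 : z - l y ∈ LinearMap.ker s.β := by
      rw [LinearMap.mem_ker, map_sub, hy.symm]
      have : s.β (l y) = s.c y := DFunLike.congr_fun hl y
      rw [this, sub_self]
    rw [hrangeβα] at h1
    obtain ⟨w, hw⟩ := h1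
    obtain ⟨x, hx⟩ := hcr w
    refine ⟨(x, y), ?_⟩
    show comp1 x + l y = z
    rw [hcomp1, LinearMap.comp_apply, hx, hw]
    abel
  have hmemα' : ∀ x : ↥(LinearMap.ker (d (s.k + 1))),
      ((x : (P (s.k + 1 + 1) : Type u)), (0 : (s.C : Type u))) ∈ LinearMap.ker c' := by
    intro x
    have hcrx : cr (x : (P (s.k + 1 + 1) : Type u)) = 0 :=
      Subtype.ext (LinearMap.mem_ker.mp x.2)
    rw [LinearMap.mem_ker]
    have hch : c' ((x : (P (s.k + 1 + 1) : Type u)), 0) =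
        s.α (cr (x : (P (s.k + 1 + 1) : Type u))) + l 0 := rfl
    rw [hch, map_zero, add_zero, hcrx, map_zero]
  set α' : ↥(LinearMap.ker (d (s.k + 1))) →ₗ[R] ↥(LinearMap.ker c') :=
    LinearMap.codRestrict _
      ((LinearMap.inl R (P (s.k + 1 + 1) : Type u) (s.C : Type u)) ∘ₗ
        (LinearMap.ker (d (s.k + 1))).subtype) hmemα' with hα'def
  have hmemβ' : ∀ z : ↥(LinearMap.ker c'),
      ((z : (P (s.k + 1 + 1) : Type u) × (s.C : Type u))).2 ∈ LinearMap.ker s.c := by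
    rintro ⟨⟨x, y⟩, hz⟩
    have hz' : comp1 x + l y = 0 := hz
    have h2 : l y = -(comp1 x) := by
      rw [eq_neg_iff_add_eq_zero, add_comm]; exact hz'
    have h3 : s.c y = s.β (l y) := (DFunLike.congr_fun hl y).symm
    rw [LinearMap.mem_ker, h3, h2, map_neg, hcomp1, LinearMap.comp_apply,
      s.hab.apply_apply_eq_zero, neg_zero]
  set β' : ↥(LinearMap.ker c') →ₗ[R] ↥(LinearMap.ker s.c) :=
    LinearMap.codRestrict _
      ((LinearMap.snd R (P (s.k + 1 + 1) : Type u) (s.C : Type u)) ∘ₗ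
        (LinearMap.ker c').subtype) hmemβ' with hβ'def
  have hα' : Function.Injective α' := by
    intro a b hab2
    have h1 : ((a : (P (s.k + 1 + 1) : Type u)), (0 : (s.C : Type u))) =
        ((b : (P (s.k + 1 + 1) : Type u)), (0 : (s.C : Type u))) :=
      congrArg Subtype.val hab2
    exact Subtype.ext (congrArg Prod.fst h1)
  have hβ' : Function.Surjective β' := by
    intro t
    have h1 : l (t : (s.C : Type u)) ∈ LinearMap.ker s.β := by
      rw [LinearMap.mem_ker]
      have h0 : s.β (l (t : (s.C : Type u))) = s.c (t : (s.C : Type u)) :=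
        DFunLike.congr_fun hl _
      rw [h0]
      exact LinearMap.mem_ker.mp t.2
    rw [hrangeβα] at h1
    obtain ⟨w, hw⟩ := h1
    obtain ⟨x, hx⟩ := hcr (-w)
    have hmem : ((x, (t : (s.C : Type u))) :
        (P (s.k + 1 + 1) : Type u) × (s.C : Type u)) ∈ LinearMap.ker c' := by
      rw [LinearMap.mem_ker]
      show comp1 x + l (t : (s.C : Type u)) = 0
      rw [hcomp1, LinearMap.comp_apply, hx, map_neg, hw, neg_add_cancel]
    exact ⟨⟨(x, (t : (s.C : Type u))), hmem⟩, Subtype.ext rfl⟩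
  have hab' : Function.Exact α' β' := by
    intro z
    constructor
    · intro hz
      obtain ⟨⟨x, y⟩, hzmem⟩ := z
      have hy : y = 0 := congrArg Subtype.val hz
      subst hy
      have hzmem' : comp1 x + l 0 = 0 := hzmem
      rw [map_zero, add_zero, hcomp1, LinearMap.comp_apply] at hzmem'
      have hcrx : cr x = 0 := s.hα (by rw [hzmem', map_zero])
      have hx : x ∈ LinearMap.ker (d (s.k + 1)) := by
        have := congrArg Subtype.val hcrx
        exact LinearMap.mem_ker.mpr this
      exact ⟨⟨x, hx⟩, Subtype.ext rfl⟩
    · rintro ⟨w, rfl⟩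
      exact Subtype.ext rfl
  exact
    { k := s.k + 1
      Sp := ModuleCat.of R ↥(LinearMap.ker s.c)
      C := ModuleCat.of R ((P (s.k + 1 + 1) : Type u) × (s.C : Type u))
      projC := by
        show Module.Projective R ((P (s.k + 1 + 1) : Type u) × (s.C : Type u))
        infer_instance
      c := c'
      hc := hc'
      α := α'
      β := β'
      hα := hα'
      hβ := hβ'
      hab := hab'
      eSp := s.eS
      eS := eprop_of_ses α' β' hα' hβ' hab' (hZ (s.k + 1)) s.eS }

/-- One step of the right recursion. -/
noncomputable def rstep (s : RSt R P d) : RSt R P d := by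
  haveI := s.projRA
  haveI := hproj (s.k + 1)
  have hflat : IsFlatModule R (s.RA : Type u) := isFlat_of_projective _ s.projRA
  have hkerπ : LinearMap.ker s.π = LinearMap.range s.ι := s.hexc.linearMap_ker_eq
  set ψu : ↥(LinearMap.ker s.π) →ₗ[R] (s.RA : Type u) :=
    s.j ∘ₗ (((LinearEquiv.ofInjective s.ι s.hι).symm :
      ↥(LinearMap.range s.ι) ≃ₗ[R] ((s.A : Type u))).toLinearMap ∘ₗ
        Submodule.inclusion hkerπ.le) with hψudef
  have huex := (hZ s.k) (s.RA : Type u) hflat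
    ((s.RA : Type u) ⧸ LinearMap.range s.j) s.π s.hπ ψu
  set u := Classical.choose huex with hudef
  have hu : ∀ x : ↥(LinearMap.ker s.π), u x = ψu x := Classical.choose_spec huex
  have huι : ∀ a : (s.A : Type u), u (s.ι a) = s.j a := by
    intro a
    have hmem : s.ι a ∈ LinearMap.ker s.π :=
      LinearMap.mem_ker.mpr (s.hexc.apply_apply_eq_zero a)
    have h1 := hu ⟨s.ι a, hmem⟩
    rw [h1, hψudef, LinearMap.comp_apply, LinearMap.comp_apply]
    congr 1
    rw [LinearEquiv.coe_coe, LinearEquiv.symm_apply_eq]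
    exact Subtype.ext (LinearEquiv.ofInjective_apply s.ι a).symm
  set v : ((s.RA : Type u) ⧸ LinearMap.range s.j) →ₗ[R] (P (s.k + 1) : Type u) :=
    (LinearMap.ker (d s.k)).subtype ∘ₗ s.π with hvdef
  set jn := u.prod v with hjndef
  have hvι : ∀ a : (s.A : Type u), v (s.ι a) = 0 := by
    intro a
    rw [hvdef, LinearMap.comp_apply,
      show s.π (s.ι a) = 0 from s.hexc.apply_apply_eq_zero a, map_zero]
  have hjn : Function.Injective jn := by
    intro z z' hzz
    have h1 : u z = u z' := congrArg Prod.fst hzz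
    have h2 : v z = v z' := congrArg Prod.snd hzz
    have h3 : s.π (z - z') = 0 := by
      apply Subtype.ext
      show v (z - z') = 0
      rw [map_sub, h2, sub_self]
    have h4 : z - z' ∈ LinearMap.range s.ι := by rw [← hkerπ]; exact h3
    obtain ⟨a, ha⟩ := h4
    have h5 : s.j a = 0 := by
      rw [← huι a, ha, map_sub, h1, sub_self]
    have h6 : a = 0 := s.hj (by rw [h5, map_zero])
    have : z - z' = 0 := by rw [← ha, h6, map_zero]
    exact sub_eq_zero.mp this
  -- the next corestricted differential
  have hE : P (s.k + 1) = P (s.k - 1 + 1 + 1) := congrArg P (by ring)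
  have hk1 : s.k - 1 + 1 = s.k := by ring
  set mc : (P (s.k + 1) : Type u) ≃ₗ[R] (P (s.k - 1 + 1 + 1) : Type u) := mcast hE with hmcdef
  have hmemθ : ∀ x : (P (s.k + 1) : Type u),
      d (s.k - 1 + 1) (mc x) ∈ LinearMap.ker (d (s.k - 1)) :=
    fun x => LinearMap.mem_ker.mpr ((hexd (s.k - 1)).apply_apply_eq_zero (mc x))
  set dd : (P (s.k + 1) : Type u) →ₗ[R] (P (s.k - 1 + 1) : Type u) :=
    (d (s.k - 1 + 1)) ∘ₗ mc.toLinearMap with hdddef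
  have hmemθ' : ∀ x : (P (s.k + 1) : Type u), dd x ∈ LinearMap.ker (d (s.k - 1)) :=
    fun x => hmemθ x
  set θ : (P (s.k + 1) : Type u) →ₗ[R] ↥(LinearMap.ker (d (s.k - 1))) :=
    LinearMap.codRestrict _ dd hmemθ' with hθdef
  have hθker : ∀ x : (P (s.k + 1) : Type u), θ x = 0 ↔ d s.k x = 0 := by
    intro x
    constructor
    · intro h0
      have h1 : d (s.k - 1 + 1) (mc x) = 0 := congrArg Subtype.val h0
      exact (d_mcast_ker hk1 hE x).mp h1
    · intro h0
      exact Subtype.ext ((d_mcast_ker hk1 hE x).mpr h0)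
  have hθsurj : Function.Surjective θ := by
    intro z
    have h1 : (z : (P (s.k - 1 + 1) : Type u)) ∈ LinearMap.range (d (s.k - 1 + 1)) := by
      rw [← (hexd (s.k - 1)).linearMap_ker_eq]
      exact z.2
    obtain ⟨y, hy⟩ := h1
    exact ⟨mc.symm y, Subtype.ext (by
      show d (s.k - 1 + 1) (mc (mc.symm y)) = _
      rw [LinearEquiv.apply_symm_apply, hy])⟩
  -- the new quotient
  have hbase : ∀ w ∈ LinearMap.range s.j,
      (LinearMap.range jn).mkQ ((LinearMap.inl R (s.RA : Type u) (P (s.k + 1) : Type u)) w)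
        = 0 := by
    rintro w ⟨a, rfl⟩
    have h1 : ((s.j a, 0) : Prod (s.RA : Type u) (P (s.k + 1) : Type u)) = jn (s.ι a) := by
      rw [hjndef]
      show _ = (u (s.ι a), v (s.ι a))
      rw [huι, hvι]
    show (LinearMap.range jn).mkQ (s.j a, 0) = 0
    rw [h1, Submodule.mkQ_apply, Submodule.Quotient.mk_eq_zero]
    exact ⟨s.ι a, rfl⟩
  set ι' : ((s.RA : Type u) ⧸ LinearMap.range s.j) →ₗ[R]
      ((Prod (s.RA : Type u) (P (s.k + 1) : Type u)) ⧸ LinearMap.range jn) :=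
    Submodule.liftQ _ ((LinearMap.range jn).mkQ ∘ₗ
      (LinearMap.inl R (s.RA : Type u) (P (s.k + 1) : Type u)))
      (fun w hw => hbase w hw) with hι'def
  have hbase2 : ∀ w ∈ LinearMap.range jn,
      (θ ∘ₗ (LinearMap.snd R (s.RA : Type u) (P (s.k + 1) : Type u))) w = 0 := by
    rintro w ⟨x, rfl⟩
    show θ (v x) = 0
    rw [(hθker (v x))]
    exact (s.π x).2
  set π' : ((Prod (s.RA : Type u) (P (s.k + 1) : Type u)) ⧸ LinearMap.range jn) →ₗ[R]
      ↥(LinearMap.ker (d (s.k - 1))) :=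
    Submodule.liftQ _ (θ ∘ₗ (LinearMap.snd R (s.RA : Type u) (P (s.k + 1) : Type u)))
      (fun w hw => hbase2 w hw) with hπ'def
  have hι' : Function.Injective ι' := by
    intro z z' hzz
    obtain ⟨y, rfl⟩ := Submodule.mkQ_surjective _ z
    obtain ⟨y', rfl⟩ := Submodule.mkQ_surjective _ z'
    have h1 : (LinearMap.range jn).mkQ (y - y', 0) = 0 := by
      have : ι' ((LinearMap.range s.j).mkQ (y - y')) = 0 := by
        rw [map_sub, map_sub, hzz, sub_self]
      rw [hι'def] at this
      rw [show ((y - y', 0) : Prod (s.RA : Type u) (P (s.k + 1) : Type u)) =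
        (LinearMap.inl R (s.RA : Type u) (P (s.k + 1) : Type u)) (y - y') from rfl]
      exact this
    rw [Submodule.mkQ_apply, Submodule.Quotient.mk_eq_zero] at h1
    obtain ⟨x, hx⟩ := h1
    have h2 : v x = 0 := congrArg Prod.snd hx
    have h3 : s.π x = 0 := Subtype.ext h2
    have h4 : x ∈ LinearMap.range s.ι := by rw [← hkerπ]; exact h3
    obtain ⟨a, rfl⟩ := h4
    have h5 : y - y' = s.j a := by
      have h5a : u (s.ι a) = y - y' := congrArg Prod.fst hx
      rw [← h5a, huι a]
    rw [Submodule.mkQ_apply, Submodule.mkQ_apply, Submodule.Quotient.eq]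
    exact h5 ▸ ⟨a, rfl⟩
  have hπ' : Function.Surjective π' := by
    intro z
    obtain ⟨p, hp⟩ := hθsurj z
    exact ⟨(LinearMap.range jn).mkQ (0, p), hp⟩
  have hexc' : Function.Exact ι' π' := by
    intro g
    constructor
    · intro hg
      obtain ⟨⟨y, p⟩, rfl⟩ := Submodule.mkQ_surjective _ g
      have h1 : θ p = 0 := hg
      have h2 : p ∈ LinearMap.ker (d s.k) := LinearMap.mem_ker.mpr ((hθker p).mp h1)
      obtain ⟨x, hx⟩ := s.hπ ⟨p, h2⟩
      have hvx : v x = p := by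
        rw [hvdef, LinearMap.comp_apply, hx]
        rfl
      refine ⟨(LinearMap.range s.j).mkQ (y - u x), ?_⟩
      have h3 : ι' ((LinearMap.range s.j).mkQ (y - u x)) =
          (LinearMap.range jn).mkQ (y - u x, 0) := rfl
      rw [h3, Submodule.mkQ_apply, Submodule.mkQ_apply, Submodule.Quotient.eq]
      refine ⟨-x, ?_⟩
      show (u (-x), v (-x)) = _
      rw [map_neg, map_neg, hvx]
      apply Prod.ext
      · show -(u x) = y - u x - y
        abel
      · show -p = 0 - p
        abel
    · rintro ⟨w, rfl⟩
      obtain ⟨y, rfl⟩ := Submodule.mkQ_surjective _ w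
      have h4 : ι' ((LinearMap.range s.j).mkQ y) = (LinearMap.range jn).mkQ (y, 0) := rfl
      rw [h4]
      show θ 0 = 0
      rw [map_zero]
  exact
    { k := s.k - 1
      A := ModuleCat.of R ((s.RA : Type u) ⧸ LinearMap.range s.j)
      RA := ModuleCat.of R (Prod (s.RA : Type u) (P (s.k + 1) : Type u))
      projRA := by
        show Module.Projective R (Prod (s.RA : Type u) (P (s.k + 1) : Type u))
        infer_instance
      j := jn
      hj := hjn
      ι := ι'
      π := π'
      hι := hι'
      hπ := hπ'
      hexc := hexc'
      eA := s.eG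
      eG := eprop_of_ses ι' π' hι' hπ' hexc' s.eG (hZ (s.k - 1)) }

end Steps
section Assemble

variable {R : Type u} [Ring R]

lemma assemble_exact (T Y : ℤ → ModuleCat.{u} R)
    (π : ∀ n : ℤ, (T n : Type u) →ₗ[R] Y n)
    (ι : ∀ n : ℤ, (Y (n + 1) : Type u) →ₗ[R] T n)
    (hπ : ∀ n, Function.Surjective (π n)) (hι : ∀ n, Function.Injective (ι n))
    (hker : ∀ n, LinearMap.ker (π n) = LinearMap.range (ι n)) (n : ℤ) :
    Function.Exact (ι (n + 1) ∘ₗ π (n + 1 + 1)) (ι n ∘ₗ π (n + 1)) := by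
  intro x
  constructor
  · intro hx
    have h1 : π (n + 1) x = 0 := by
      apply hι n
      rw [map_zero]
      exact hx
    have h2 : x ∈ LinearMap.range (ι (n + 1)) := by
      rw [← hker (n + 1)]
      exact h1
    obtain ⟨y, hy⟩ := h2
    obtain ⟨z, hz⟩ := hπ (n + 1 + 1) y
    exact ⟨z, by rw [LinearMap.comp_apply, hz, hy]⟩
  · rintro ⟨z, rfl⟩
    rw [LinearMap.comp_apply, LinearMap.comp_apply]
    have h3 : ι (n + 1) (π (n + 1 + 1) z) ∈ LinearMap.ker (π (n + 1)) := by
      rw [hker (n + 1)]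
      exact ⟨_, rfl⟩
    rw [LinearMap.mem_ker.mp h3, map_zero]

lemma assemble_hom (T Y : ℤ → ModuleCat.{u} R)
    (π : ∀ n : ℤ, (T n : Type u) →ₗ[R] Y n)
    (ι : ∀ n : ℤ, (Y (n + 1) : Type u) →ₗ[R] T n)
    (hπ : ∀ n, Function.Surjective (π n)) (hι : ∀ n, Function.Injective (ι n))
    (hker : ∀ n, LinearMap.ker (π n) = LinearMap.range (ι n))
    (hE : ∀ n, EProp R (Y n : Type u))
    (F : Type u) [AddCommGroup F] [Module R F] (hF : IsFlatModule R F) (n : ℤ) :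
    Function.Exact
      (fun g : (T n : Type u) →ₗ[R] F => g ∘ₗ (ι n ∘ₗ π (n + 1)))
      (fun g : (T (n + 1) : Type u) →ₗ[R] F => g ∘ₗ (ι (n + 1) ∘ₗ π (n + 1 + 1))) := by
  intro g
  constructor
  · intro hg
    have hgι : ∀ y : (Y (n + 1 + 1) : Type u), g (ι (n + 1) y) = 0 := by
      intro y
      obtain ⟨z, hz⟩ := hπ (n + 1 + 1) y
      have h0 := DFunLike.congr_fun hg z
      rw [LinearMap.comp_apply, LinearMap.comp_apply, hz] at h0
      exact h0
    have hker_le : LinearMap.ker (π (n + 1)) ≤ LinearMap.ker g := by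
      intro x hx
      rw [hker (n + 1)] at hx
      obtain ⟨y, rfl⟩ := hx
      exact LinearMap.mem_ker.mpr (hgι y)
    obtain ⟨ψ, hψ⟩ := factor_surj (π (n + 1)) (hπ (n + 1)) g hker_le
    set e := LinearEquiv.ofInjective (ι n) (hι n) with hedef
    set ψ0 : ↥(LinearMap.ker (π n)) →ₗ[R] F :=
      ψ ∘ₗ ((e.symm : ↥(LinearMap.range (ι n)) ≃ₗ[R] (Y (n + 1) : Type u)).toLinearMap ∘ₗ
        Submodule.inclusion (hker n).le) with hψ0def
    obtain ⟨h, hh⟩ := hE n F hF (T n : Type u) (π n) (hπ n) ψ0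
    refine ⟨h, ?_⟩
    apply LinearMap.ext
    intro x
    show h (ι n (π (n + 1) x)) = g x
    have hy : ι n (π (n + 1) x) ∈ LinearMap.ker (π n) := by
      rw [hker n]
      exact ⟨_, rfl⟩
    have h1 := hh ⟨ι n (π (n + 1) x), hy⟩
    rw [h1, hψ0def, LinearMap.comp_apply, LinearMap.comp_apply]
    have h2 : (e.symm : ↥(LinearMap.range (ι n)) ≃ₗ[R] (Y (n + 1) : Type u))
        (Submodule.inclusion (hker n).le ⟨ι n (π (n + 1) x), hy⟩) = π (n + 1) x := by
      rw [LinearEquiv.symm_apply_eq]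
      exact Subtype.ext (LinearEquiv.ofInjective_apply (ι n) (π (n + 1) x)).symm
    rw [LinearEquiv.coe_coe, h2]
    exact hψ x
  · rintro ⟨h, rfl⟩
    apply LinearMap.ext
    intro z
    show h (ι n (π (n + 1) (ι (n + 1) (π (n + 1 + 1) z)))) = 0
    have h1 : π (n + 1) (ι (n + 1) (π (n + 1 + 1) z)) = 0 := by
      have hmem : ι (n + 1) (π (n + 1 + 1) z) ∈ LinearMap.ker (π (n + 1)) := by
        rw [hker (n + 1)]
        exact ⟨_, rfl⟩
      exact hmem
    rw [h1, map_zero, map_zero]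

end Assemble
/-- Every strongly two-degree Ding projective left `R`-module is Ding
projective. -/
theorem strongly_twoDegree_ding_projective_is_ding_projective (R : Type u) [Ring R]
    (M : Type u) [AddCommGroup M] [Module R M]
    (hM : IsStronglyTwoDegreeDingProjective R M) :
    IsDingProjective R M := by
  obtain ⟨Dmod, f, hDing, hff, hsf, ⟨eM⟩⟩ := hM
  obtain ⟨P, d, hproj, hexd, hhom, ⟨eD⟩⟩ := hDing
  have hZ : ∀ n, EProp R ↥(LinearMap.ker (d n)) := eprop_cycle P d hproj hexd hhom
  -- the module K = ker f, and f' : D ↠ K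
  have hmemf : ∀ x : (Dmod : Type u), f x ∈ LinearMap.ker f := fun x =>
    LinearMap.mem_ker.mpr (hff.apply_apply_eq_zero x)
  set f' : (Dmod : Type u) →ₗ[R] ↥(LinearMap.ker f) :=
    LinearMap.codRestrict _ f hmemf with hf'def
  have hf' : Function.Surjective f' := by
    intro t
    obtain ⟨y, hy⟩ := (hff ((t : (Dmod : Type u)))).mp (LinearMap.mem_ker.mp t.2)
    exact ⟨y, Subtype.ext hy⟩
  have hkf : LinearMap.ker f' = LinearMap.ker f := LinearMap.ker_codRestrict _ _ _
  -- EProp for D and K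
  have eDprop : EProp R (Dmod : Type u) := eprop_congr eD.symm (hZ (-1))
  have hclaim : ∀ (F : Type u) [AddCommGroup F] [Module R F], IsFlatModule R F →
      ∀ φ : ↥(LinearMap.ker f') →ₗ[R] F, ∃ Φ : (Dmod : Type u) →ₗ[R] F,
        ∀ x : ↥(LinearMap.ker f'), Φ x = φ x := by
    intro F _ _ hF φ
    have hmem2 : ∀ x : (Dmod : Type u), f x ∈ LinearMap.ker f' :=
      fun x => (le_of_eq hkf.symm) (hmemf x)
    set g : (Dmod : Type u) →ₗ[R] F := φ ∘ₗ LinearMap.codRestrict _ f hmem2 with hgdef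
    have hg : g ∘ₗ f = 0 := by
      apply LinearMap.ext
      intro x
      rw [LinearMap.comp_apply, LinearMap.zero_apply, hgdef, LinearMap.comp_apply]
      have hz : LinearMap.codRestrict _ f hmem2 (f x) = 0 :=
        Subtype.ext (hff.apply_apply_eq_zero x)
      rw [hz, map_zero]
    obtain ⟨h, hh⟩ := ((hsf F hF) g).mp hg
    refine ⟨h, ?_⟩
    intro x
    have hx : (x : (Dmod : Type u)) ∈ LinearMap.ker f := (le_of_eq hkf) x.2
    obtain ⟨y, hy⟩ := (hff _).mp (LinearMap.mem_ker.mp hx)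
    have h1 : h (x : (Dmod : Type u)) = g y := by
      rw [← hy]
      exact DFunLike.congr_fun hh y
    rw [h1, hgdef, LinearMap.comp_apply]
    congr 1
    exact Subtype.ext hy
  have eK : EProp R ↥(LinearMap.ker f) := eprop_of_surj f' hf' eDprop hclaim
  -- ===== initial left state =====
  set d0c : (P ((0:ℤ) + 1) : Type u) →ₗ[R] (P ((-1:ℤ) + 1) : Type u) := d 0 with hd0c
  have hmemc1 : ∀ x : (P ((0:ℤ) + 1) : Type u), d0c x ∈ LinearMap.ker (d (-1)) :=
    fun x => LinearMap.mem_ker.mpr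
      ((hexd (-1)).apply_apply_eq_zero (show (P ((-1:ℤ) + 1 + 1) : Type u) from x))
  set cr1 : (P ((0:ℤ) + 1) : Type u) →ₗ[R] ↥(LinearMap.ker (d (-1))) :=
    LinearMap.codRestrict _ d0c hmemc1 with hcr1def
  have hcr1 : Function.Surjective cr1 := by
    intro z
    obtain ⟨y, hy⟩ := ((hexd (-1)) ((z : (P ((-1:ℤ) + 1) : Type u)))).mp
      (LinearMap.mem_ker.mp z.2)
    refine ⟨show (P ((0:ℤ) + 1) : Type u) from y, Subtype.ext ?_⟩
    exact hy
  set c1 : (P ((0:ℤ) + 1) : Type u) →ₗ[R] ↥(LinearMap.ker f) :=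
    f' ∘ₗ ((eD.symm : ↥(LinearMap.ker (d (-1))) ≃ₗ[R] (Dmod : Type u)).toLinearMap ∘ₗ cr1)
    with hc1def
  have hc1 : Function.Surjective c1 := by
    apply hf'.comp
    exact (eD.symm.surjective).comp hcr1
  have hmemα1 : ∀ x : ↥(LinearMap.ker (d 0)),
      (LinearMap.ker (d 0)).subtype x ∈ LinearMap.ker c1 := by
    intro x
    have hz : cr1 ((x : (P ((0:ℤ) + 1) : Type u))) = 0 := by
      apply Subtype.ext
      show d0c _ = _
      exact LinearMap.mem_ker.mp x.2
    rw [LinearMap.mem_ker]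
    show c1 ((x : (P ((0:ℤ) + 1) : Type u))) = 0
    show f' (eD.symm (cr1 ((x : (P ((0:ℤ) + 1) : Type u))))) = 0
    rw [hz, map_zero, map_zero]
  set α1 : ↥(LinearMap.ker (d 0)) →ₗ[R] ↥(LinearMap.ker c1) :=
    LinearMap.codRestrict _ (LinearMap.ker (d 0)).subtype hmemα1 with hα1def
  have hα1 : Function.Injective α1 := by
    intro a b h
    have hv : ((α1 a : ↥(LinearMap.ker c1)) : (P ((0:ℤ) + 1) : Type u)) =
        ((α1 b : ↥(LinearMap.ker c1)) : (P ((0:ℤ) + 1) : Type u)) := congrArg Subtype.val h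
    exact Subtype.ext hv
  have hmemβ1 : ∀ z : ↥(LinearMap.ker c1),
      eD.symm (cr1 ((z : (P ((0:ℤ) + 1) : Type u)))) ∈ LinearMap.ker f := by
    intro z
    have h1 : c1 ((z : (P ((0:ℤ) + 1) : Type u))) = 0 := LinearMap.mem_ker.mp z.2
    exact LinearMap.mem_ker.mpr (congrArg Subtype.val h1)
  set β1 : ↥(LinearMap.ker c1) →ₗ[R] ↥(LinearMap.ker f) :=
    LinearMap.codRestrict (LinearMap.ker f)
      ((eD.symm : ↥(LinearMap.ker (d (-1))) ≃ₗ[R] (Dmod : Type u)).toLinearMap ∘ₗ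
        (cr1 ∘ₗ (LinearMap.ker c1).subtype)) (fun z => hmemβ1 z) with hβ1def
  have hβ1 : Function.Surjective β1 := by
    intro t
    obtain ⟨x, hx⟩ := hcr1 (eD ((t : (Dmod : Type u))))
    have hxk : x ∈ LinearMap.ker c1 := by
      rw [LinearMap.mem_ker, hc1def, LinearMap.comp_apply, LinearMap.comp_apply, hx,
        LinearEquiv.coe_coe, LinearEquiv.symm_apply_apply]
      exact Subtype.ext (LinearMap.mem_ker.mp t.2)
    refine ⟨⟨x, hxk⟩, ?_⟩
    apply Subtype.ext
    show eD.symm (cr1 x) = (t : (Dmod : Type u))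
    rw [hx, LinearEquiv.symm_apply_apply]
  have hab1 : Function.Exact α1 β1 := by
    intro z
    constructor
    · intro hz
      have h1 : eD.symm (cr1 ((z : (P ((0:ℤ) + 1) : Type u)))) = 0 :=
        congrArg Subtype.val hz
      rw [LinearEquiv.map_eq_zero_iff] at h1
      have h3 : (z : (P ((0:ℤ) + 1) : Type u)) ∈ LinearMap.ker (d 0) := by
        rw [LinearMap.mem_ker]
        have h4 : d0c ((z : (P ((0:ℤ) + 1) : Type u))) = 0 := congrArg Subtype.val h1
        exact h4
      exact ⟨⟨_, h3⟩, Subtype.ext rfl⟩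
    · rintro ⟨w, rfl⟩
      apply Subtype.ext
      show eD.symm (cr1 (((α1 w : ↥(LinearMap.ker c1)) : (P ((0:ℤ) + 1) : Type u)))) = 0
      have hz : cr1 ((w : (P ((0:ℤ) + 1) : Type u))) = 0 := by
        apply Subtype.ext
        show d0c _ = _
        exact LinearMap.mem_ker.mp w.2
      have hval : ((α1 w : ↥(LinearMap.ker c1)) : (P ((0:ℤ) + 1) : Type u)) =
        (w : (P ((0:ℤ) + 1) : Type u)) := rfl
      rw [hval, hz, map_zero]
  set ls0 : LSt R P d :=
    { k := 0
      Sp := ModuleCat.of R ↥(LinearMap.ker f)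
      C := P ((0:ℤ) + 1)
      projC := hproj ((0:ℤ) + 1)
      c := c1
      hc := hc1
      α := α1
      β := β1
      hα := hα1
      hβ := hβ1
      hab := hab1
      eSp := eK
      eS := eprop_of_ses α1 β1 hα1 hβ1 hab1 (hZ 0) eK } with hls0
  -- ===== initial right state =====
  set j0 : ↥(LinearMap.ker f) →ₗ[R] (P ((-1:ℤ) + 1) : Type u) :=
    (LinearMap.ker (d (-1))).subtype ∘ₗ
      ((eD : (Dmod : Type u) ≃ₗ[R] ↥(LinearMap.ker (d (-1)))).toLinearMap ∘ₗ
        (LinearMap.ker f).subtype) with hj0def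
  have hj0 : Function.Injective j0 := by
    intro a b h
    apply Subtype.ext
    apply eD.injective
    apply Subtype.ext
    exact h
  set δ : (Dmod : Type u) →ₗ[R] ((P ((-1:ℤ) + 1) : Type u) ⧸ LinearMap.range j0) :=
    (LinearMap.range j0).mkQ ∘ₗ ((LinearMap.ker (d (-1))).subtype ∘ₗ
      (eD : (Dmod : Type u) ≃ₗ[R] ↥(LinearMap.ker (d (-1)))).toLinearMap) with hδdef
  have hδval : ∀ x : (Dmod : Type u),
      δ x = (LinearMap.range j0).mkQ ((eD x : (P ((-1:ℤ) + 1) : Type u))) := fun x => rfl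
  have hleδ : LinearMap.ker f' ≤ LinearMap.ker δ := by
    intro x hx
    have hxf : x ∈ LinearMap.ker f := (le_of_eq hkf) hx
    rw [LinearMap.mem_ker, hδval, Submodule.mkQ_apply, Submodule.Quotient.mk_eq_zero]
    exact ⟨⟨x, hxf⟩, rfl⟩
  obtain ⟨ι1, hι1⟩ := factor_surj f' hf' δ hleδ
  have hι1inj : Function.Injective ι1 := by
    intro a b h
    obtain ⟨x, rfl⟩ := hf' a
    obtain ⟨y, rfl⟩ := hf' b
    have h1 : δ (x - y) = 0 := by
      rw [map_sub, ← hι1 x, ← hι1 y, h, sub_self]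
    rw [hδval, Submodule.mkQ_apply, Submodule.Quotient.mk_eq_zero] at h1
    obtain ⟨a0, ha0⟩ := h1
    have h2 : eD (x - y) = eD ((a0 : (Dmod : Type u))) := by
      apply Subtype.ext
      exact ha0.symm
    have h3 : x - y = (a0 : (Dmod : Type u)) := eD.injective h2
    have h4 : x - y ∈ LinearMap.ker f := by rw [h3]; exact a0.2
    have h5 : f' (x - y) = 0 := by
      apply Subtype.ext
      show f (x - y) = 0
      exact LinearMap.mem_ker.mp h4
    rw [map_sub] at h5
    exact sub_eq_zero.mp h5
  let d1c : (P ((-1:ℤ) + 1) : Type u) →ₗ[R] (P ((-2:ℤ) + 1) : Type u) := d (-1)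
  have hmemθ1 : ∀ x : (P ((-1:ℤ) + 1) : Type u), d1c x ∈ LinearMap.ker (d (-2)) :=
    fun x => LinearMap.mem_ker.mpr
      ((hexd (-2)).apply_apply_eq_zero (show (P ((-2:ℤ) + 1 + 1) : Type u) from x))
  set θ1 : (P ((-1:ℤ) + 1) : Type u) →ₗ[R] ↥(LinearMap.ker (d (-2))) :=
    LinearMap.codRestrict _ d1c hmemθ1 with hθ1def
  have hθ1surj : Function.Surjective θ1 := by
    intro z
    obtain ⟨y, hy⟩ := ((hexd (-2)) ((z : (P ((-2:ℤ) + 1) : Type u)))).mp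
      (LinearMap.mem_ker.mp z.2)
    refine ⟨show (P ((-1:ℤ) + 1) : Type u) from y, Subtype.ext ?_⟩
    exact hy
  have hleθ1 : ∀ w ∈ LinearMap.range j0, θ1 w = 0 := by
    rintro w ⟨a, rfl⟩
    apply Subtype.ext
    show d1c (j0 a) = 0
    have hm : (j0 a : (P ((-1:ℤ) + 1) : Type u)) ∈ LinearMap.ker (d (-1)) :=
      (eD ((a : (Dmod : Type u)))).2
    exact LinearMap.mem_ker.mp hm
  set π1 : ((P ((-1:ℤ) + 1) : Type u) ⧸ LinearMap.range j0) →ₗ[R]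
      ↥(LinearMap.ker (d (-2))) :=
    Submodule.liftQ _ θ1 (fun w hw => LinearMap.mem_ker.mpr (hleθ1 w hw)) with hπ1def
  have hπ1 : Function.Surjective π1 := by
    intro z
    obtain ⟨p, hp⟩ := hθ1surj z
    refine ⟨(LinearMap.range j0).mkQ p, ?_⟩
    rw [hπ1def, Submodule.mkQ_apply, Submodule.liftQ_apply]
    exact hp
  have hexc1 : Function.Exact ι1 π1 := by
    intro g
    constructor
    · intro hg
      obtain ⟨p, rfl⟩ := Submodule.mkQ_surjective _ g
      rw [hπ1def, Submodule.mkQ_apply, Submodule.liftQ_apply] at hg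
      have h1 : θ1 p = 0 := hg
      have h2 : p ∈ LinearMap.ker (d (-1)) := by
        rw [LinearMap.mem_ker]
        have h4 : d1c p = 0 := congrArg Subtype.val h1
        exact h4
      refine ⟨f' (eD.symm ⟨p, h2⟩), ?_⟩
      have h8 : ((eD (eD.symm ⟨p, h2⟩) : (P ((-1:ℤ) + 1) : Type u))) = p :=
        congrArg Subtype.val (eD.apply_symm_apply ⟨p, h2⟩)
      rw [hι1, hδval, h8]
    · rintro ⟨w, rfl⟩
      obtain ⟨x, rfl⟩ := hf' w
      have h6 : ι1 (f' x) = (LinearMap.range j0).mkQ ((eD x : (P ((-1:ℤ) + 1) : Type u))) := by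
        rw [hι1, hδval]
      rw [h6, hπ1def, Submodule.mkQ_apply, Submodule.liftQ_apply]
      apply Subtype.ext
      have hm : ((eD x : (P ((-1:ℤ) + 1) : Type u))) ∈ LinearMap.ker (d (-1)) := (eD x).2
      exact LinearMap.mem_ker.mp hm
  set rs0 : RSt R P d :=
    { k := -2
      A := ModuleCat.of R ↥(LinearMap.ker f)
      RA := P ((-1:ℤ) + 1)
      projRA := hproj ((-1:ℤ) + 1)
      j := j0
      hj := hj0
      ι := ι1
      π := π1
      hι := hι1inj
      hπ := hπ1
      hexc := hexc1
      eA := eK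
      eG := eprop_of_ses ι1 π1 hι1inj hπ1 hexc1 eK (hZ (-2)) } with hrs0
  -- ===== the chains =====
  set LC : ℕ → LSt R P d := fun n => Nat.rec ls0 (fun _ s => lstep hproj hexd hZ s) n with hLC
  set RC : ℕ → RSt R P d := fun n => Nat.rec rs0 (fun _ s => rstep hproj hexd hZ s) n with hRC
  -- ===== the assembled complex =====
  let T : ℤ → ModuleCat.{u} R := fun n =>
    match n with
    | Int.ofNat 0 => (RC 0).RA
    | Int.ofNat (k + 1) => (LC k).C
    | Int.negSucc k => (RC (k + 1)).RA
  let Y : ℤ → ModuleCat.{u} R := fun n =>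
    match n with
    | Int.ofNat 0 => ModuleCat.of R (((RC 0).RA : Type u) ⧸ LinearMap.range (RC 0).j)
    | Int.ofNat (k + 1) => (LC k).Sp
    | Int.negSucc k =>
        ModuleCat.of R (((RC (k + 1)).RA : Type u) ⧸ LinearMap.range (RC (k + 1)).j)
  let pi : ∀ n : ℤ, (T n : Type u) →ₗ[R] Y n := fun n =>
    match n with
    | Int.ofNat 0 => (LinearMap.range (RC 0).j).mkQ
    | Int.ofNat (k + 1) => (LC k).c
    | Int.negSucc k => (LinearMap.range (RC (k + 1)).j).mkQ
  let io : ∀ n : ℤ, (Y (n + 1) : Type u) →ₗ[R] T n := fun n =>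
    match n with
    | Int.ofNat 0 => (RC 0).j
    | Int.ofNat (k + 1) => (LinearMap.ker (LC k).c).subtype
    | Int.negSucc 0 => (RC 1).j
    | Int.negSucc (k + 1) => (RC (k + 2)).j
  have hπs : ∀ n : ℤ, Function.Surjective (pi n) := by
    intro n
    match n with
    | Int.ofNat 0 => exact Submodule.mkQ_surjective _
    | Int.ofNat (k + 1) => exact (LC k).hc
    | Int.negSucc k => exact Submodule.mkQ_surjective _
  have hιs : ∀ n : ℤ, Function.Injective (io n) := by
    intro n
    match n with
    | Int.ofNat 0 => exact (RC 0).hj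
    | Int.ofNat (k + 1) => exact Submodule.injective_subtype _
    | Int.negSucc 0 => exact (RC 1).hj
    | Int.negSucc (k + 1) => exact (RC (k + 2)).hj
  have hkers : ∀ n : ℤ, LinearMap.ker (pi n) = LinearMap.range (io n) := by
    intro n
    match n with
    | Int.ofNat 0 => exact Submodule.ker_mkQ _
    | Int.ofNat (k + 1) => exact (Submodule.range_subtype _).symm
    | Int.negSucc 0 => exact Submodule.ker_mkQ _
    | Int.negSucc (k + 1) => exact Submodule.ker_mkQ _
  have hEs : ∀ n : ℤ, EProp R (Y n : Type u) := by
    intro n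
    match n with
    | Int.ofNat 0 => exact (RC 0).eG
    | Int.ofNat (k + 1) => exact (LC k).eSp
    | Int.negSucc k => exact (RC (k + 1)).eG
  have hprojT : ∀ n : ℤ, Module.Projective R (T n : Type u) := by
    intro n
    match n with
    | Int.ofNat 0 => exact (RC 0).projRA
    | Int.ofNat (k + 1) => exact (LC k).projC
    | Int.negSucc k => exact (RC (k + 1)).projRA
  refine ⟨T, fun n => (io n) ∘ₗ (pi (n + 1)), hprojT, ?_, ?_, ?_⟩
  · intro n
    exact assemble_exact T Y pi io hπs hιs hkers n
  · intro F _ _ hF n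
    exact assemble_hom T Y pi io hπs hιs hkers hEs F hF n
  · have hkd : LinearMap.ker ((io (-1)) ∘ₗ (pi ((-1:ℤ) + 1))) =
        LinearMap.range (RC 0).j := by
      ext x
      rw [LinearMap.mem_ker, LinearMap.comp_apply]
      constructor
      · intro hx
        have h1 : pi ((-1:ℤ) + 1) x = 0 := hιs (-1) (by rw [hx, map_zero])
        have h2 := LinearMap.mem_ker.mpr h1
        have h3 := (hkers ((-1:ℤ) + 1)) ▸ h2
        exact h3
      · intro hx
        have h1 : (pi ((-1:ℤ) + 1)) x = 0 := by
          show ((LinearMap.range (RC 0).j).mkQ) x = 0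
          rw [Submodule.mkQ_apply, Submodule.Quotient.mk_eq_zero]
          exact hx
        rw [h1, map_zero]
    exact ⟨(eM.trans (LinearEquiv.ofInjective j0 hj0)).trans
      (LinearEquiv.ofEq _ _ hkd.symm)⟩
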